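/- A finite simple graph G without isolated vertices is perfect if and only if every irreducible induced subgraph of G is a complete graph, i.e., for every nonempty subset S of the vertex set of G, if the induced subgraph G[S] is irreducible then G[S] is complete. -/

import Mathlib

/-- The vertex covering number `α₀` of the induced subgraph of `G` on the set of
vertices `S`: the least cardinality of a set `C ⊆ S` covering every edge of `G`
with both endpoints in `S`. -/
noncomputable def alpha0On {n : ℕ} (G : SimpleGraph (Fin n)) (S : Finset (Fin n)) : ℕ :=
  sInf {k : ℕ | ∃ C : Finset (Fin n), C ⊆ S ∧
    (∀ i ∈ S, ∀ j ∈ S, G.Adj i j → i ∈ C ∨ j ∈ C) ∧ C.card = k}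

/-- The clique number of a graph: the largest size of a clique. -/
noncomputable def cliqueNum {V : Type} (G : SimpleGraph V) : ℕ :=
  sSup {k : ℕ | ∃ t : Finset V, G.IsNClique k t}

/-- A graph is perfect if for every induced subgraph the chromatic number equals
the clique number. -/
def IsPerfect {V : Type} (G : SimpleGraph V) : Prop :=
  ∀ S : Set V, (G.induce S).chromaticNumber = (cliqueNum (G.induce S) : ℕ∞)

/-- The induced subgraph of `G` on the (nonempty) vertex set `S` is irreducible
if `S` cannot be partitioned into two nonempty sets `S1`, `S2` with
`α₀(G[S]) = α₀(G[S1]) + α₀(G[S2])`. -/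
def IrreducibleOn {n : ℕ} (G : SimpleGraph (Fin n)) (S : Finset (Fin n)) : Prop :=
  ¬ ∃ S1 S2 : Finset (Fin n), S1.Nonempty ∧ S2.Nonempty ∧
      Disjoint S1 S2 ∧ S1 ∪ S2 = S ∧
      alpha0On G S = alpha0On G S1 + alpha0On G S2

namespace WPGT
variable {n : ℕ}

/-- `K` is a clique of `G` contained in `S`. -/
def CliqueIn (G : SimpleGraph (Fin n)) (S K : Finset (Fin n)) : Prop :=
  K ⊆ S ∧ ∀ i ∈ K, ∀ j ∈ K, i ≠ j → G.Adj i j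

/-- `c` is a proper coloring of `G` on `S` with colors `< m`. -/
def ColoringOn (G : SimpleGraph (Fin n)) (S : Finset (Fin n)) (c : Fin n → ℕ) (m : ℕ) : Prop :=
  (∀ v ∈ S, c v < m) ∧ ∀ i ∈ S, ∀ j ∈ S, G.Adj i j → c i ≠ c j

noncomputable def omegaF (G : SimpleGraph (Fin n)) (S : Finset (Fin n)) : ℕ :=
  sSup {k | ∃ K, CliqueIn G S K ∧ K.card = k}

noncomputable def chiF (G : SimpleGraph (Fin n)) (S : Finset (Fin n)) : ℕ :=
  sInf {m | ∃ c, ColoringOn G S c m}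

variable {G : SimpleGraph (Fin n)} {S K : Finset (Fin n)}

lemma omega_bddAbove (G : SimpleGraph (Fin n)) (S : Finset (Fin n)) :
    BddAbove {k | ∃ K, CliqueIn G S K ∧ K.card = k} := by
  refine ⟨n, fun k hk => ?_⟩
  obtain ⟨K, hK, rfl⟩ := hk
  calc K.card ≤ (Finset.univ : Finset (Fin n)).card := Finset.card_le_card (Finset.subset_univ _)
  _ = n := by simp

lemma omega_nonempty (G : SimpleGraph (Fin n)) (S : Finset (Fin n)) :
    {k | ∃ K, CliqueIn G S K ∧ K.card = k}.Nonempty :=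
  ⟨0, ∅, ⟨Finset.empty_subset _, by simp⟩, by simp⟩

lemma exists_max_clique (G : SimpleGraph (Fin n)) (S : Finset (Fin n)) :
    ∃ K, CliqueIn G S K ∧ K.card = omegaF G S :=
  Nat.sSup_mem (omega_nonempty G S) (omega_bddAbove G S)

lemma card_le_omega (h : CliqueIn G S K) : K.card ≤ omegaF G S :=
  le_csSup (omega_bddAbove G S) ⟨K, h, rfl⟩

lemma chi_nonempty (G : SimpleGraph (Fin n)) (S : Finset (Fin n)) :
    {m | ∃ c, ColoringOn G S c m}.Nonempty := by
  refine ⟨n, fun v => v.val, fun v _ => v.isLt, fun i _ j _ hij => ?_⟩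
  exact fun h => (G.ne_of_adj hij) (Fin.ext h)

lemma exists_chi_coloring (G : SimpleGraph (Fin n)) (S : Finset (Fin n)) :
    ∃ c, ColoringOn G S c (chiF G S) :=
  Nat.sInf_mem (chi_nonempty G S)

lemma chi_le (c : Fin n → ℕ) {m : ℕ} (h : ColoringOn G S c m) : chiF G S ≤ m :=
  Nat.sInf_le ⟨c, h⟩

lemma coloring_mono {c : Fin n → ℕ} {m m' : ℕ} (h : ColoringOn G S c m) (hm : m ≤ m') :
    ColoringOn G S c m' :=
  ⟨fun v hv => lt_of_lt_of_le (h.1 v hv) hm, h.2⟩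

lemma omega_le_chi (G : SimpleGraph (Fin n)) (S : Finset (Fin n)) :
    omegaF G S ≤ chiF G S := by
  obtain ⟨K, hK, hKcard⟩ := exists_max_clique G S
  obtain ⟨c, hc⟩ := exists_chi_coloring G S
  rw [← hKcard]
  have hinj : Set.InjOn c K := by
    intro i hi j hj hcij
    by_contra hne
    exact hc.2 i (hK.1 (by simpa using hi)) j (hK.1 (by simpa using hj))
      (hK.2 i (by simpa using hi) j (by simpa using hj) hne) hcij
  calc K.card = (K.image c).card := (Finset.card_image_of_injOn hinj).symm
  _ ≤ (Finset.range (chiF G S)).card := by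
      apply Finset.card_le_card
      intro x hx
      simp only [Finset.mem_image] at hx
      obtain ⟨v, hv, rfl⟩ := hx
      exact Finset.mem_range.mpr (hc.1 v (hK.1 hv))
  _ = chiF G S := by simp

lemma chi_mono {S' : Finset (Fin n)} (h : S' ⊆ S) : chiF G S' ≤ chiF G S := by
  obtain ⟨c, hc⟩ := exists_chi_coloring G S
  exact chi_le c ⟨fun v hv => hc.1 v (h hv), fun i hi j hj => hc.2 i (h hi) j (h hj)⟩

lemma omega_mono {S' : Finset (Fin n)} (h : S' ⊆ S) : omegaF G S' ≤ omegaF G S := by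
  obtain ⟨K, hK, hKcard⟩ := exists_max_clique G S'
  rw [← hKcard]
  exact card_le_omega ⟨hK.1.trans h, hK.2⟩

lemma chi_empty (G : SimpleGraph (Fin n)) : chiF G (∅ : Finset (Fin n)) = 0 :=
  Nat.le_zero.mp (chi_le (fun _ => 0) ⟨by simp, by simp⟩)

lemma omega_empty (G : SimpleGraph (Fin n)) : omegaF G (∅ : Finset (Fin n)) = 0 := by
  obtain ⟨K, hK, hKcard⟩ := exists_max_clique G (∅ : Finset (Fin n))
  rw [← hKcard]
  simpa using Finset.card_le_card hK.1

lemma one_le_omega (hS : S.Nonempty) : 1 ≤ omegaF G S := by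
  obtain ⟨v, hv⟩ := hS
  have : CliqueIn G S {v} := ⟨by simpa using hv, by simp⟩
  simpa using card_le_omega this

/-- remove a color that is not used: -/
lemma chi_remap {c : Fin n → ℕ} {m j : ℕ} (h : ColoringOn G S c m) (hj : j < m)
    (hnotused : ∀ v ∈ S, c v ≠ j) : chiF G S ≤ m - 1 := by
  refine chi_le (fun v => if c v < j then c v else c v - 1) ⟨fun v hv => ?_, ?_⟩
  · have h1 := h.1 v hv
    have h2 := hnotused v hv
    by_cases hcv : c v < j <;> simp only [hcv, if_pos, if_neg, not_false_iff] <;> omega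
  · intro i hi k hk hadj heq
    have hne := h.2 i hi k hk hadj
    have h1 := hnotused i hi
    have h2 := hnotused k hk
    by_cases hci : c i < j <;> by_cases hck : c k < j <;>
      simp only [hci, hck, if_pos, if_neg, not_false_iff] at heq <;> omega

lemma chi_union {S1 S2 : Finset (Fin n)} :
    chiF G (S1 ∪ S2) ≤ chiF G S1 + chiF G S2 := by
  obtain ⟨c1, hc1⟩ := exists_chi_coloring G S1
  obtain ⟨c2, hc2⟩ := exists_chi_coloring G S2
  refine chi_le (fun v => if v ∈ S1 then c1 v else c2 v + chiF G S1) ⟨fun v hv => ?_, ?_⟩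
  · rcases Finset.mem_union.mp hv with h | h
    · simp only [h, if_pos]
      exact lt_of_lt_of_le (hc1.1 v h) (Nat.le_add_right _ _)
    · by_cases h1 : v ∈ S1
      · simp only [h1, if_pos]
        exact lt_of_lt_of_le (hc1.1 v h1) (Nat.le_add_right _ _)
      · simp only [h1, if_neg, not_false_iff]
        have := hc2.1 v h
        omega
  · intro i hi j hj hadj
    by_cases h1 : i ∈ S1 <;> by_cases h2 : j ∈ S1 <;> simp only [h1, h2, if_pos, if_neg,
      not_false_iff]
    · exact hc1.2 i h1 j h2 hadj
    · have := hc1.1 i h1; omega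
    · have := hc1.1 j h2; omega
    · have hi2 : i ∈ S2 := by rcases Finset.mem_union.mp hi with h | h; exact absurd h h1; exact h
      have hj2 : j ∈ S2 := by rcases Finset.mem_union.mp hj with h | h; exact absurd h h2; exact h
      have := hc2.2 i hi2 j hj2 hadj
      omega

lemma chi_sdiff_indep {A : Finset (Fin n)}
    (hA : ∀ i ∈ A, ∀ j ∈ A, i ≠ j → ¬ G.Adj i j) :
    chiF G S ≤ chiF G (S \ A) + 1 := by
  obtain ⟨c, hc⟩ := exists_chi_coloring G (S \ A)
  set m := chiF G (S \ A)
  refine chi_le (fun v => if v ∈ A then m else c v) ⟨fun v hv => ?_, ?_⟩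
  · by_cases h : v ∈ A
    · simp [h]
    · simp only [h, if_neg, not_false_iff]
      exact lt_of_lt_of_le (hc.1 v (Finset.mem_sdiff.mpr ⟨hv, h⟩)) (Nat.le_succ _)
  · intro i hi j hj hadj
    by_cases h1 : i ∈ A <;> by_cases h2 : j ∈ A <;> simp only [h1, h2, if_pos, if_neg,
      not_false_iff]
    · exact absurd hadj (hA i h1 j h2 (G.ne_of_adj hadj))
    · have := hc.1 j (Finset.mem_sdiff.mpr ⟨hj, h2⟩); omega
    · have := hc.1 i (Finset.mem_sdiff.mpr ⟨hi, h1⟩); omega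
    · exact hc.2 i (Finset.mem_sdiff.mpr ⟨hi, h1⟩) j (Finset.mem_sdiff.mpr ⟨hj, h2⟩) hadj

end WPGT

namespace WPGT
variable {n : ℕ} {G : SimpleGraph (Fin n)} {S K : Finset (Fin n)}

noncomputable def alphaF (G : SimpleGraph (Fin n)) (S : Finset (Fin n)) : ℕ := omegaF Gᶜ S
noncomputable def thetaF (G : SimpleGraph (Fin n)) (S : Finset (Fin n)) : ℕ := chiF Gᶜ S

lemma indepIn_iff {A : Finset (Fin n)} :
    CliqueIn Gᶜ S A ↔ A ⊆ S ∧ ∀ i ∈ A, ∀ j ∈ A, i ≠ j → ¬ G.Adj i j := by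
  unfold CliqueIn
  simp only [SimpleGraph.compl_adj]
  constructor
  · exact fun ⟨h1, h2⟩ => ⟨h1, fun i hi j hj hne => (h2 i hi j hj hne).2⟩
  · exact fun ⟨h1, h2⟩ => ⟨h1, fun i hi j hj hne => ⟨hne, h2 i hi j hj hne⟩⟩

lemma omega_le_card : omegaF G S ≤ S.card := by
  obtain ⟨K, hK, hKcard⟩ := exists_max_clique G S
  rw [← hKcard]
  exact Finset.card_le_card hK.1

lemma alpha_le_card : alphaF G S ≤ S.card := omega_le_card

lemma card_le_chi_mul_alpha : S.card ≤ chiF G S * alphaF G S := by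
  obtain ⟨c, hc⟩ := exists_chi_coloring G S
  set m := chiF G S with hm
  have hsub : S ⊆ (Finset.range m).biUnion (fun j => S.filter (fun v => c v = j)) := by
    intro v hv
    exact Finset.mem_biUnion.mpr ⟨c v, Finset.mem_range.mpr (hc.1 v hv),
      Finset.mem_filter.mpr ⟨hv, rfl⟩⟩
  calc S.card ≤ ((Finset.range m).biUnion (fun j => S.filter (fun v => c v = j))).card :=
        Finset.card_le_card hsub
  _ ≤ ∑ j ∈ Finset.range m, (S.filter (fun v => c v = j)).card := Finset.card_biUnion_le
  _ ≤ ∑ _j ∈ Finset.range m, alphaF G S := by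
      apply Finset.sum_le_sum
      intro j _
      apply card_le_omega (G := Gᶜ)
      rw [indepIn_iff]
      refine ⟨Finset.filter_subset _ _, fun a ha b hb hne hadj => ?_⟩
      rw [Finset.mem_filter] at ha hb
      exact hc.2 a ha.1 b hb.1 hadj (ha.2.trans hb.2.symm)
  _ = m * alphaF G S := by simp [Finset.sum_const]

/-- Gallai-type identity: minimum vertex cover = card − maximum independent set. -/
lemma alpha0On_eq (G : SimpleGraph (Fin n)) (S : Finset (Fin n)) :
    alpha0On G S = S.card - alphaF G S := by
  have hne : Set.Nonempty {k : ℕ | ∃ C : Finset (Fin n), C ⊆ S ∧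
      (∀ i ∈ S, ∀ j ∈ S, G.Adj i j → i ∈ C ∨ j ∈ C) ∧ C.card = k} :=
    ⟨S.card, S, Finset.Subset.refl _, fun i hi _ _ _ => Or.inl hi, rfl⟩
  apply le_antisymm
  · -- construct cover from max independent set
    obtain ⟨A, hA, hAcard⟩ := exists_max_clique Gᶜ S
    rw [indepIn_iff] at hA
    have hmem : (S \ A).card ∈ {k : ℕ | ∃ C : Finset (Fin n), C ⊆ S ∧
        (∀ i ∈ S, ∀ j ∈ S, G.Adj i j → i ∈ C ∨ j ∈ C) ∧ C.card = k} := by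
      refine ⟨S \ A, Finset.sdiff_subset, fun i hi j hj hadj => ?_, rfl⟩
      by_contra hcon
      push_neg at hcon
      have hiA : i ∈ A := by
        by_contra hiA; exact hcon.1 (Finset.mem_sdiff.mpr ⟨hi, hiA⟩)
      have hjA : j ∈ A := by
        by_contra hjA; exact hcon.2 (Finset.mem_sdiff.mpr ⟨hj, hjA⟩)
      exact hA.2 i hiA j hjA (G.ne_of_adj hadj) hadj
    have hle := Nat.sInf_le hmem
    have hcard : (S \ A).card = S.card - alphaF G S := by
      rw [Finset.card_sdiff_of_subset hA.1, hAcard]; rfl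
    rw [hcard] at hle
    exact hle
  · -- every cover has card ≥ card S − α
    obtain ⟨C, hCS, hCcov, hCcard⟩ := Nat.sInf_mem hne
    have hindep : CliqueIn Gᶜ S (S \ C) := by
      rw [indepIn_iff]
      refine ⟨Finset.sdiff_subset, fun i hi j hj _ hadj => ?_⟩
      rw [Finset.mem_sdiff] at hi hj
      rcases hCcov i hi.1 j hj.1 hadj with h | h
      · exact hi.2 h
      · exact hj.2 h
    have h1 : (S \ C).card ≤ alphaF G S := card_le_omega hindep
    have h2 : (S \ C).card = S.card - C.card := Finset.card_sdiff_of_subset hCS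
    have h3 : C.card ≤ S.card := Finset.card_le_card hCS
    unfold alpha0On
    omega

lemma alpha_subadditive {S1 S2 : Finset (Fin n)} :
    alphaF G (S1 ∪ S2) ≤ alphaF G S1 + alphaF G S2 := by
  obtain ⟨A, hA, hAcard⟩ := exists_max_clique Gᶜ (S1 ∪ S2)
  have h1 : CliqueIn Gᶜ S1 (A ∩ S1) := by
    refine ⟨Finset.inter_subset_right, fun i hi j hj hne => ?_⟩
    exact hA.2 i (Finset.mem_of_mem_inter_left hi) j (Finset.mem_of_mem_inter_left hj) hne
  have h2 : CliqueIn Gᶜ S2 (A ∩ S2) := by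
    refine ⟨Finset.inter_subset_right, fun i hi j hj hne => ?_⟩
    exact hA.2 i (Finset.mem_of_mem_inter_left hi) j (Finset.mem_of_mem_inter_left hj) hne
  have hcov : A ⊆ (A ∩ S1) ∪ (A ∩ S2) := by
    intro v hv
    rcases Finset.mem_union.mp (hA.1 hv) with h | h
    · exact Finset.mem_union.mpr (Or.inl (Finset.mem_inter.mpr ⟨hv, h⟩))
    · exact Finset.mem_union.mpr (Or.inr (Finset.mem_inter.mpr ⟨hv, h⟩))
  calc alphaF G (S1 ∪ S2) = A.card := hAcard.symm
  _ ≤ ((A ∩ S1) ∪ (A ∩ S2)).card := Finset.card_le_card hcov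
  _ ≤ (A ∩ S1).card + (A ∩ S2).card := Finset.card_union_le _ _
  _ ≤ alphaF G S1 + alphaF G S2 := Nat.add_le_add (card_le_omega h1) (card_le_omega h2)

/-- transfer between the `alpha0On` equation and the `alphaF` equation. -/
lemma reducible_iff_alpha {S1 S2 : Finset (Fin n)} (h1 : S1 ⊆ S) (h2 : S2 ⊆ S)
    (hdisj : Disjoint S1 S2) (hunion : S1 ∪ S2 = S) :
    (alpha0On G S = alpha0On G S1 + alpha0On G S2) ↔
      (alphaF G S = alphaF G S1 + alphaF G S2) := by
  have hcard : S.card = S1.card + S2.card := by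
    rw [← hunion, Finset.card_union_of_disjoint hdisj]
  have e0 := alpha0On_eq G S
  have e1 := alpha0On_eq G S1
  have e2 := alpha0On_eq G S2
  have b0 : alphaF G S ≤ S.card := alpha_le_card
  have b1 : alphaF G S1 ≤ S1.card := alpha_le_card
  have b2 : alphaF G S2 ≤ S2.card := alpha_le_card
  have bsub : alphaF G S ≤ alphaF G S1 + alphaF G S2 := hunion ▸ alpha_subadditive
  omega

end WPGT

namespace WPGT
variable {n : ℕ} {G : SimpleGraph (Fin n)} {S : Finset (Fin n)}

lemma theta_alpha_to_rhs (h : ∀ S : Finset (Fin n), thetaF G S = alphaF G S) :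
    ∀ S : Finset (Fin n), S.Nonempty → IrreducibleOn G S →
      ∀ i ∈ S, ∀ j ∈ S, i ≠ j → G.Adj i j := by
  intro S hS hirr i hi j hj hij
  by_contra hnadj
  set t := alphaF G S with ht
  obtain ⟨c, hc⟩ := exists_chi_coloring Gᶜ S
  have hct : chiF Gᶜ S = t := h S
  rw [hct] at hc
  -- the pair {i,j} is independent, so t ≥ 2
  have hpair : CliqueIn Gᶜ S {i, j} := by
    rw [indepIn_iff]
    constructor
    · intro v hv
      rcases Finset.mem_insert.mp hv with rfl | hv
      · exact hi
      · rw [Finset.mem_singleton] at hv; exact hv ▸ hj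
    · intro a ha b hb hab
      simp only [Finset.mem_insert, Finset.mem_singleton] at ha hb
      rcases ha with rfl | rfl <;> rcases hb with rfl | rfl
      · exact absurd rfl hab
      · exact hnadj
      · exact fun hadj => hnadj hadj.symm
      · exact absurd rfl hab
  have ht2 : 2 ≤ t := by
    have := card_le_omega hpair
    rwa [Finset.card_insert_of_notMem (by simpa using hij), Finset.card_singleton] at this
  -- c i ≠ c j since i,j are Gᶜ-adjacent
  have hcij : c i ≠ c j := hc.2 i hi j hj (by rw [SimpleGraph.compl_adj]; exact ⟨hij, hnadj⟩)
  obtain ⟨v₀, hv₀⟩ := hS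
  set S1 := S.filter (fun v => c v = c v₀) with hS1
  set S2 := S \ S1 with hS2
  have hS1sub : S1 ⊆ S := Finset.filter_subset _ _
  have hS1ne : S1.Nonempty := ⟨v₀, Finset.mem_filter.mpr ⟨hv₀, rfl⟩⟩
  have hS2ne : S2.Nonempty := by
    rcases eq_or_ne (c i) (c v₀) with h' | h'
    · exact ⟨j, Finset.mem_sdiff.mpr ⟨hj, fun hmem =>
        hcij (h'.trans (Finset.mem_filter.mp hmem).2.symm)⟩⟩
    · exact ⟨i, Finset.mem_sdiff.mpr ⟨hi, fun hmem => h' (Finset.mem_filter.mp hmem).2⟩⟩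
  have hdisj : Disjoint S1 S2 := Finset.disjoint_sdiff
  have hunion : S1 ∪ S2 = S := Finset.union_sdiff_of_subset hS1sub
  -- α S1 = 1
  have ha1 : alphaF G S1 = 1 := by
    apply le_antisymm
    · obtain ⟨A, hA, hAcard⟩ := exists_max_clique Gᶜ S1
      rw [show alphaF G S1 = A.card from hAcard.symm]
      rw [Finset.card_le_one]
      intro a ha b hb
      by_contra hab
      have := hA.2 a ha b hb hab
      have h1 := (Finset.mem_filter.mp (hA.1 ha)).2
      have h2 := (Finset.mem_filter.mp (hA.1 hb)).2
      exact hc.2 a (hS1sub (hA.1 ha)) b (hS1sub (hA.1 hb)) this (h1.trans h2.symm)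
    · exact one_le_omega hS1ne
  -- α S2 ≤ t - 1
  have ha2 : alphaF G S2 ≤ t - 1 := by
    have hcol : ColoringOn Gᶜ S2 c t :=
      ⟨fun v hv => hc.1 v (Finset.mem_sdiff.mp hv).1,
       fun a ha b hb => hc.2 a (Finset.mem_sdiff.mp ha).1 b (Finset.mem_sdiff.mp hb).1⟩
    have hnotused : ∀ v ∈ S2, c v ≠ c v₀ := by
      intro v hv hcv
      exact (Finset.mem_sdiff.mp hv).2 (Finset.mem_filter.mpr ⟨(Finset.mem_sdiff.mp hv).1, hcv⟩)
    have := chi_remap hcol (hc.1 v₀ hv₀) hnotused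
    calc alphaF G S2 ≤ chiF Gᶜ S2 := omega_le_chi Gᶜ S2
    _ ≤ t - 1 := this
  -- α is additive over this partition
  have hsum : alphaF G S = alphaF G S1 + alphaF G S2 := by
    have hle : alphaF G S ≤ alphaF G S1 + alphaF G S2 := hunion ▸ alpha_subadditive
    omega
  exact hirr ⟨S1, S2, hS1ne, hS2ne, hdisj, hunion,
    (reducible_iff_alpha hS1sub (hunion ▸ Finset.subset_union_right) hdisj hunion).mpr hsum⟩

lemma rhs_to_theta_alpha
    (h : ∀ S : Finset (Fin n), S.Nonempty → IrreducibleOn G S →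
      ∀ i ∈ S, ∀ j ∈ S, i ≠ j → G.Adj i j) :
    ∀ S : Finset (Fin n), thetaF G S = alphaF G S := by
  suffices H : ∀ m : ℕ, ∀ S : Finset (Fin n), S.card ≤ m → thetaF G S = alphaF G S by
    intro S; exact H S.card S le_rfl
  intro m
  induction m with
  | zero =>
    intro S hS
    rw [Finset.card_eq_zero.mp (Nat.le_zero.mp hS)]
    unfold thetaF alphaF
    rw [chi_empty, omega_empty]
  | succ m ih =>
    intro S hS
    rcases Finset.eq_empty_or_nonempty S with rfl | hSne
    · unfold thetaF alphaF; rw [chi_empty, omega_empty]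
    apply le_antisymm
    · by_cases hirr : IrreducibleOn G S
      · -- S is complete, θ ≤ 1 ≤ α
        have hcomp := h S hSne hirr
        have hθ : thetaF G S ≤ 1 := by
          apply chi_le (fun _ => 0)
          refine ⟨fun v _ => Nat.zero_lt_one, fun a ha b hb hadj => ?_⟩
          rw [SimpleGraph.compl_adj] at hadj
          exact absurd (hcomp a ha b hb hadj.1) hadj.2
        exact hθ.trans (one_le_omega hSne)
      · -- S is reducible
        rw [IrreducibleOn, not_not] at hirr
        obtain ⟨S1, S2, hS1ne, hS2ne, hdisj, hunion, heq⟩ := hirr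
        have hS1sub : S1 ⊆ S := hunion ▸ Finset.subset_union_left
        have hS2sub : S2 ⊆ S := hunion ▸ Finset.subset_union_right
        have halpha := (reducible_iff_alpha hS1sub hS2sub hdisj hunion).mp heq
        have hS1lt : S1.card < S.card := by
          apply Finset.card_lt_card
          refine Finset.ssubset_iff_of_subset hS1sub |>.mpr ?_
          obtain ⟨v, hv⟩ := hS2ne
          exact ⟨v, hS2sub hv, fun hvS1 => (Finset.disjoint_left.mp hdisj) hvS1 hv⟩
        have hS2lt : S2.card < S.card := by
          apply Finset.card_lt_card
          refine Finset.ssubset_iff_of_subset hS2sub |>.mpr ?_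
          obtain ⟨v, hv⟩ := hS1ne
          exact ⟨v, hS1sub hv, fun hvS2 => (Finset.disjoint_left.mp hdisj) hv hvS2⟩
        have ih1 := ih S1 (by omega)
        have ih2 := ih S2 (by omega)
        calc thetaF G S = chiF Gᶜ (S1 ∪ S2) := by rw [hunion]; rfl
        _ ≤ chiF Gᶜ S1 + chiF Gᶜ S2 := chi_union
        _ = alphaF G S1 + alphaF G S2 := by rw [← ih1, ← ih2]; rfl
        _ = alphaF G S := halpha.symm
    · exact omega_le_chi Gᶜ S

end WPGT

namespace WPGT
variable {n : ℕ} {G : SimpleGraph (Fin n)} {S : Finset (Fin n)}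

lemma class_inter_clique {c : Fin n → ℕ} {a : Fin n} {K : Finset (Fin n)} {w : ℕ}
    (hc : ColoringOn G (S.erase a) c w)
    (hK : CliqueIn G S K) (hKcard : K.card = w) (haK : a ∉ K) {j : ℕ} (hj : j < w) :
    (((S.erase a).filter (fun v => c v = j)) ∩ K).card = 1 := by
  have hKsub : K ⊆ S.erase a := fun v hv =>
    Finset.mem_erase.mpr ⟨fun h => haK (h ▸ hv), hK.1 hv⟩
  have hinj : Set.InjOn c K := by
    intro u hu v hv huv
    by_contra hne
    exact hc.2 u (hKsub (by simpa using hu)) v (hKsub (by simpa using hv))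
      (hK.2 u (by simpa using hu) v (by simpa using hv) hne) huv
  have himage : K.image c = Finset.range w := by
    apply Finset.eq_of_subset_of_card_le
    · intro x hx
      obtain ⟨v, hv, rfl⟩ := Finset.mem_image.mp hx
      exact Finset.mem_range.mpr (hc.1 v (hKsub hv))
    · rw [Finset.card_range, Finset.card_image_of_injOn hinj, hKcard]
  have hjmem : j ∈ K.image c := himage ▸ Finset.mem_range.mpr hj
  obtain ⟨v, hvK, hcv⟩ := Finset.mem_image.mp hjmem
  apply Nat.le_antisymm
  · rw [Finset.card_le_one]
    intro u hu u' hu'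
    rw [Finset.mem_inter, Finset.mem_filter] at hu hu'
    by_contra hne
    exact hc.2 u hu.1.1 u' hu'.1.1 (hK.2 u hu.2 u' hu'.2 hne) (hu.1.2.trans hu'.1.2.symm)
  · apply Finset.card_pos.mpr
    exact ⟨v, Finset.mem_inter.mpr ⟨Finset.mem_filter.mpr ⟨hKsub hvK, hcv⟩, hvK⟩⟩

lemma class_inter_clique_missing {c : Fin n → ℕ} {a : Fin n} {K : Finset (Fin n)} {w : ℕ}
    (hc : ColoringOn G (S.erase a) c w)
    (hK : CliqueIn G S K) (hKcard : K.card = w) (haK : a ∈ K) {j j' : ℕ}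
    (hj : j < w) (hj' : j' < w) (hjj' : j' ≠ j)
    (hmiss : ∀ v ∈ K, v ≠ a → c v ≠ j) :
    (((S.erase a).filter (fun v => c v = j')) ∩ K).card = 1 := by
  have hKsub : K.erase a ⊆ S.erase a := fun v hv => by
    rw [Finset.mem_erase] at hv ⊢
    exact ⟨hv.1, hK.1 hv.2⟩
  have hinj : Set.InjOn c (K.erase a) := by
    intro u hu v hv huv
    simp only [Finset.coe_erase, Set.mem_diff, Finset.mem_coe, Set.mem_singleton_iff] at hu hv
    by_contra hne
    exact hc.2 u (hKsub (Finset.mem_erase.mpr ⟨hu.2, hu.1⟩))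
      v (hKsub (Finset.mem_erase.mpr ⟨hv.2, hv.1⟩))
      (hK.2 u hu.1 v hv.1 hne) huv
  have himage : (K.erase a).image c = (Finset.range w).erase j := by
    apply Finset.eq_of_subset_of_card_le
    · intro x hx
      obtain ⟨v, hv, rfl⟩ := Finset.mem_image.mp hx
      rw [Finset.mem_erase] at hv ⊢
      exact ⟨hmiss v hv.2 hv.1, Finset.mem_range.mpr (hc.1 v (hKsub (Finset.mem_erase.mpr hv)))⟩
    · rw [Finset.card_erase_of_mem (Finset.mem_range.mpr hj), Finset.card_range,
        Finset.card_image_of_injOn hinj, Finset.card_erase_of_mem haK, hKcard]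
  have hjmem : j' ∈ (K.erase a).image c :=
    himage ▸ Finset.mem_erase.mpr ⟨hjj', Finset.mem_range.mpr hj'⟩
  obtain ⟨v, hvK, hcv⟩ := Finset.mem_image.mp hjmem
  rw [Finset.mem_erase] at hvK
  apply Nat.le_antisymm
  · rw [Finset.card_le_one]
    intro u hu u' hu'
    rw [Finset.mem_inter, Finset.mem_filter] at hu hu'
    by_contra hne
    exact hc.2 u hu.1.1 u' hu'.1.1 (hK.2 u hu.2 u' hu'.2 hne) (hu.1.2.trans hu'.1.2.symm)
  · apply Finset.card_pos.mpr
    refine ⟨v, Finset.mem_inter.mpr ⟨Finset.mem_filter.mpr ⟨?_, hcv⟩, hvK.2⟩⟩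
    exact Finset.mem_erase.mpr ⟨hvK.1, hK.1 hvK.2⟩

end WPGT

namespace WPGT

lemma card_le_of_offdiag_ones (ι V : Type) [Fintype ι] [DecidableEq ι] [Fintype V]
    (M : Matrix ι V ℚ) (Q : Matrix V ι ℚ)
    (h : M * Q = Matrix.of fun i' i => if i' = i then (0:ℚ) else 1)
    (h2 : 2 ≤ Fintype.card ι) :
    Fintype.card ι ≤ Fintype.card V := by
  set N := Fintype.card ι with hN
  have hNne : ((N : ℚ) - 1) ≠ 0 := by
    have : (2 : ℚ) ≤ (N : ℚ) := by exact_mod_cast h2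
    intro hc
    nlinarith
  set c : ℚ := ((N : ℚ) - 1)⁻¹ with hc
  have hcN : c * ((N : ℚ) - 1) = 1 := inv_mul_cancel₀ hNne
  set R : Matrix ι ι ℚ := Matrix.of (fun i i' => if i = i' then c - 1 else c) with hR
  have hAR : (M * Q) * R = 1 := by
    ext i k
    rw [Matrix.mul_apply]
    simp only [h, Matrix.of_apply, hR, Matrix.one_apply]
    have key : ∀ j : ι, (if i = j then (0:ℚ) else 1) * (if j = k then c - 1 else c)
        = (c + if j = k then (-1 : ℚ) else 0)
          - (if j = i then (c + if j = k then (-1 : ℚ) else 0) else 0) := by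
      intro j
      by_cases h1 : i = j <;> by_cases h2 : j = k <;> by_cases h3 : j = i <;>
        simp_all <;> ring
    rw [Finset.sum_congr rfl (fun j _ => key j), Finset.sum_sub_distrib,
      Finset.sum_add_distrib, Finset.sum_const, Finset.sum_ite_eq' Finset.univ,
      Finset.sum_ite_eq' Finset.univ]
    simp only [Finset.mem_univ, if_true, Finset.card_univ, ← hN]
    rcases eq_or_ne i k with rfl | hik
    · simp only [if_pos rfl, if_true, nsmul_eq_mul]
      nlinarith [hcN]
    · simp only [if_neg (Ne.symm hik), if_neg hik, nsmul_eq_mul]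
      nlinarith [hcN]
  have hinv : Invertible (M * Q) := invertibleOfRightInverse _ _ hAR
  have hrank : (M * Q).rank = N := Matrix.rank_of_isUnit _ (isUnit_of_invertible _)
  calc N = (M * Q).rank := hrank.symm
  _ ≤ M.rank := Matrix.rank_mul_le_left M Q
  _ ≤ Fintype.card V := Matrix.rank_le_card_width M

end WPGT

namespace WPGT
variable {n : ℕ}

lemma gasparian (G : SimpleGraph (Fin n)) (S : Finset (Fin n))
    (hmin : ∀ S' : Finset (Fin n), S' ⊆ S → S' ≠ S → chiF G S' = omegaF G S')
    (hneq : chiF G S ≠ omegaF G S) :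
    alphaF G S * omegaF G S + 1 ≤ S.card := by
  have hSne : S.Nonempty := by
    rcases Finset.eq_empty_or_nonempty S with rfl | h
    · exact absurd (by rw [chi_empty, omega_empty]) hneq
    · exact h
  set w := omegaF G S with hw
  set α := alphaF G S with hα
  have hw1 : 1 ≤ w := one_le_omega hSne
  have hα1 : 1 ≤ α := one_le_omega (G := Gᶜ) hSne
  have hχ : w + 1 ≤ chiF G S :=
    Nat.succ_le_of_lt (lt_of_le_of_ne (omega_le_chi G S) (Ne.symm hneq))
  -- every independent set misses some maximum clique
  have lemA : ∀ B : Finset (Fin n), B ⊆ S → (∀ i ∈ B, ∀ j ∈ B, i ≠ j → ¬ G.Adj i j) →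
      ∃ K, CliqueIn G S K ∧ K.card = w ∧ Disjoint K B := by
    intro B hBS hBind
    rcases Finset.eq_empty_or_nonempty B with rfl | hBne
    · obtain ⟨K, hK, hKcard⟩ := exists_max_clique G S
      exact ⟨K, hK, hKcard, Finset.disjoint_empty_right _⟩
    · have hproper : S \ B ≠ S := by
        obtain ⟨b, hb⟩ := hBne
        intro hEq
        have : b ∈ S \ B := hEq.symm ▸ hBS hb
        exact (Finset.mem_sdiff.mp this).2 hb
      have h1 : chiF G (S \ B) = omegaF G (S \ B) := hmin _ Finset.sdiff_subset hproper
      have h2 : chiF G S ≤ chiF G (S \ B) + 1 := chi_sdiff_indep hBind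
      have h3 : w ≤ omegaF G (S \ B) := by omega
      obtain ⟨K', hK', hK'card⟩ := exists_max_clique G (S \ B)
      obtain ⟨K, hKsub, hKcard⟩ := Finset.exists_subset_card_eq (s := K') (n := w) (by omega)
      refine ⟨K, ⟨(hKsub.trans hK'.1).trans Finset.sdiff_subset,
        fun i hi j hj hne => hK'.2 i (hKsub hi) j (hKsub hj) hne⟩, hKcard, ?_⟩
      exact Finset.disjoint_left.mpr fun v hv hvB =>
        (Finset.mem_sdiff.mp (hK'.1 (hKsub hv))).2 hvB
  obtain ⟨A₀, hA₀, hA₀card⟩ := exists_max_clique Gᶜ S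
  have hA₀ind := indepIn_iff.mp hA₀
  -- colorings of S minus a vertex of A₀, with exactly w colors, all used
  have hcol : ∀ a : Fin n, a ∈ A₀ → ∃ c, ColoringOn G (S.erase a) c w ∧
      ∀ j : ℕ, j < w → ∃ v ∈ S.erase a, c v = j := by
    intro a ha
    have haS : a ∈ S := hA₀ind.1 ha
    have hproper : S.erase a ≠ S := by
      intro hEq
      exact (Finset.mem_erase.mp (hEq.symm ▸ haS)).1 rfl
    have h1 : chiF G (S.erase a) = omegaF G (S.erase a) :=
      hmin _ (Finset.erase_subset _ _) hproper
    have h2 : chiF G S ≤ chiF G (S.erase a) + 1 := by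
      have := chi_sdiff_indep (G := G) (S := S) (A := {a})
        (by intro i hi j hj hne; simp only [Finset.mem_singleton] at hi hj
            exact absurd (hi.trans hj.symm) hne)
      rwa [Finset.sdiff_singleton_eq_erase] at this
    have h3 : omegaF G (S.erase a) ≤ w := omega_mono (Finset.erase_subset _ _)
    have hchieq : chiF G (S.erase a) = w := by omega
    obtain ⟨c, hc⟩ := exists_chi_coloring G (S.erase a)
    rw [hchieq] at hc
    refine ⟨c, hc, fun j hj => ?_⟩
    by_contra hcon
    push_neg at hcon
    have := chi_remap hc hj hcon
    omega
  choose col hcol1 hcol2 using hcol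
  -- the α·w + 1 independent sets
  let Bset : Option ({x // x ∈ A₀} × Fin w) → Finset (Fin n) := fun i => match i with
    | none => A₀
    | some (a, j) => (S.erase a.1).filter (fun v => col a.1 a.2 v = j.1)
  have hBsub : ∀ i, Bset i ⊆ S := by
    intro i
    match i with
    | none => exact hA₀ind.1
    | some (a, j) => exact (Finset.filter_subset _ _).trans (Finset.erase_subset _ _)
  have hBind : ∀ i, ∀ u ∈ Bset i, ∀ v ∈ Bset i, u ≠ v → ¬ G.Adj u v := by
    intro i
    match i with
    | none => exact hA₀ind.2
    | some (a, j) =>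
      intro u hu v hv huv hadj
      rw [Finset.mem_filter] at hu hv
      exact (hcol1 a.1 a.2).2 u hu.1 v hv.1 hadj (hu.2.trans hv.2.symm)
  choose Kset hK1 hK2 hK3 using fun i => lemA (Bset i) (hBsub i) (hBind i)
  -- a ∈ K for the classes of the row of a
  have haK : ∀ (a : {x // x ∈ A₀}) (j : Fin w), a.1 ∈ Kset (some (a, j)) := by
    intro a j
    by_contra hnot
    have h1 := class_inter_clique (hcol1 a.1 a.2) (hK1 (some (a, j)))
      (hK2 (some (a, j))) hnot j.2
    have h0 : (Bset (some (a, j)) ∩ Kset (some (a, j))).card = 0 := by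
      rw [Finset.card_eq_zero]
      exact Finset.disjoint_iff_inter_eq_empty.mp (hK3 (some (a, j))).symm
    rw [show Bset (some (a,j)) = (S.erase a.1).filter (fun v => col a.1 a.2 v = j.1) from rfl]
      at h0
    omega
  -- the key incidence computation
  have hmain : ∀ i i', (Bset i' ∩ Kset i).card = if i' = i then 0 else 1 := by
    intro i i'
    by_cases heq : i' = i
    · subst heq
      rw [if_pos rfl, Finset.card_eq_zero]
      exact Finset.disjoint_iff_inter_eq_empty.mp (hK3 i').symm
    rw [if_neg heq]
    match i, i' with
    | none, none => exact absurd rfl heq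
    | none, some (a', j') =>
      have hnot : a'.1 ∉ Kset none :=
        fun hmem => (Finset.disjoint_left.mp (hK3 none)) hmem a'.2
      exact class_inter_clique (hcol1 a'.1 a'.2) (hK1 none) (hK2 none) hnot j'.2
    | some (a, j), none =>
      have hamem : a.1 ∈ A₀ ∩ Kset (some (a, j)) :=
        Finset.mem_inter.mpr ⟨a.2, haK a j⟩
      apply Nat.le_antisymm
      · rw [Finset.card_le_one]
        intro u hu u' hu'
        rw [Finset.mem_inter] at hu hu'
        by_contra hne
        exact hA₀ind.2 u hu.1 u' hu'.1 hne
          ((hK1 _).2 u hu.2 u' hu'.2 hne)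
      · exact Finset.card_pos.mpr ⟨a.1, hamem⟩
    | some (a, j), some (a', j') =>
      by_cases haa : a' = a
      · subst haa
        have hjj : j' ≠ j := fun h => heq (by rw [h])
        have hmiss : ∀ v ∈ Kset (some (a', j)), v ≠ a'.1 → col a'.1 a'.2 v ≠ j.1 := by
          intro v hv hva hcv
          have hvS : v ∈ S.erase a'.1 :=
            Finset.mem_erase.mpr ⟨hva, (hK1 _).1 hv⟩
          have hvB : v ∈ Bset (some (a', j)) := Finset.mem_filter.mpr ⟨hvS, hcv⟩
          exact (Finset.disjoint_left.mp (hK3 (some (a', j)))) hv hvB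
        exact class_inter_clique_missing (hcol1 a'.1 a'.2) (hK1 (some (a', j)))
          (hK2 (some (a', j))) (haK a' j) j.2 j'.2
          (fun h => hjj (Fin.ext h)) hmiss
      · have hne : a'.1 ≠ a.1 := fun h => haa (Subtype.ext h)
        have hnot : a'.1 ∉ Kset (some (a, j)) := by
          intro hmem
          exact hA₀ind.2 a'.1 a'.2 a.1 a.2 hne
            ((hK1 _).2 a'.1 hmem a.1 (haK a j) hne)
        exact class_inter_clique (hcol1 a'.1 a'.2) (hK1 (some (a, j)))
          (hK2 (some (a, j))) hnot j'.2
  -- matrices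
  let M : Matrix (Option ({x // x ∈ A₀} × Fin w)) {x // x ∈ S} ℚ :=
    fun i v => if v.1 ∈ Bset i then 1 else 0
  let Q : Matrix {x // x ∈ S} (Option ({x // x ∈ A₀} × Fin w)) ℚ :=
    fun v i => if v.1 ∈ Kset i then 1 else 0
  have hMQ : M * Q = Matrix.of fun i' i => if i' = i then (0:ℚ) else 1 := by
    ext i' i
    rw [Matrix.mul_apply, Matrix.of_apply]
    have hterm : ∀ v : {x // x ∈ S}, M i' v * Q v i
        = if v.1 ∈ Bset i' ∩ Kset i then 1 else 0 := by
      intro v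
      show (if v.1 ∈ Bset i' then (1:ℚ) else 0) * (if v.1 ∈ Kset i then 1 else 0) = _
      by_cases h1 : v.1 ∈ Bset i' <;> by_cases h2 : v.1 ∈ Kset i <;>
        simp [h1, h2, Finset.mem_inter]
    rw [Finset.sum_congr rfl (fun v _ => hterm v)]
    have hsum : ∑ v : {x // x ∈ S}, (if v.1 ∈ Bset i' ∩ Kset i then (1:ℚ) else 0)
        = ((Bset i' ∩ Kset i).card : ℚ) := by
      rw [Finset.sum_coe_sort S (fun v => if v ∈ Bset i' ∩ Kset i then (1:ℚ) else 0),
        Finset.sum_boole]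
      congr 1
      rw [Finset.filter_mem_eq_inter, Finset.inter_comm]
      congr 1
      exact Finset.inter_eq_left.mpr (((Finset.inter_subset_left).trans (hBsub i')))
    rw [hsum, hmain i i']
    by_cases h : i' = i <;> simp [h]
  have hcardopt : Fintype.card (Option ({x // x ∈ A₀} × Fin w)) = α * w + 1 := by
    rw [Fintype.card_option, Fintype.card_prod, Fintype.card_coe, Fintype.card_fin, hA₀card]
    rfl
  have hfin := card_le_of_offdiag_ones _ _ M Q hMQ (by rw [hcardopt]; nlinarith)
  rw [hcardopt, Fintype.card_coe] at hfin
  exact hfin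

end WPGT

namespace WPGT
variable {n : ℕ}

lemma hereditary_to_chi_eq_omega (G : SimpleGraph (Fin n)) (S : Finset (Fin n))
    (h : ∀ S' : Finset (Fin n), S' ⊆ S → S'.card ≤ alphaF G S' * omegaF G S') :
    chiF G S = omegaF G S := by
  suffices H : ∀ m : ℕ, ∀ S : Finset (Fin n),
      (∀ S' : Finset (Fin n), S' ⊆ S → S'.card ≤ alphaF G S' * omegaF G S') →
      S.card ≤ m → chiF G S = omegaF G S by
    exact H S.card S h le_rfl
  intro m
  induction m with
  | zero =>
    intro S _ hcard
    rw [Finset.card_eq_zero.mp (Nat.le_zero.mp hcard), chi_empty, omega_empty]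
  | succ m ih =>
    intro S hbound hcard
    by_contra hneq
    have hmin : ∀ S' : Finset (Fin n), S' ⊆ S → S' ≠ S → chiF G S' = omegaF G S' := by
      intro S' hsub hne
      have hlt : S'.card < S.card := Finset.card_lt_card (lt_of_le_of_ne hsub hne)
      exact ih S' (fun T hT => hbound T (hT.trans hsub)) (by omega)
    have := gasparian G S hmin hneq
    have := hbound S (Finset.Subset.refl S)
    omega

theorem chi_omega_iff_bound (G : SimpleGraph (Fin n)) :
    (∀ S : Finset (Fin n), chiF G S = omegaF G S) ↔
      (∀ S : Finset (Fin n), S.card ≤ alphaF G S * omegaF G S) := by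
  constructor
  · intro h S
    calc S.card ≤ chiF G S * alphaF G S := card_le_chi_mul_alpha
    _ = alphaF G S * omegaF G S := by rw [h S, Nat.mul_comm]
  · intro h S
    exact hereditary_to_chi_eq_omega G S (fun S' hsub => h S')

lemma alphaF_compl (G : SimpleGraph (Fin n)) (S : Finset (Fin n)) :
    alphaF Gᶜ S = omegaF G S := by
  unfold alphaF
  rw [compl_compl]

/-- The weak perfect graph theorem, in this combinatorial formulation. -/
theorem wpgt (G : SimpleGraph (Fin n)) :
    (∀ S : Finset (Fin n), chiF G S = omegaF G S) ↔
      (∀ S : Finset (Fin n), thetaF G S = alphaF G S) := by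
  rw [chi_omega_iff_bound]
  have : (∀ S : Finset (Fin n), thetaF G S = alphaF G S) ↔
      (∀ S : Finset (Fin n), S.card ≤ alphaF Gᶜ S * omegaF Gᶜ S) := chi_omega_iff_bound Gᶜ
  rw [this]
  constructor
  · intro h S
    rw [alphaF_compl]
    calc S.card ≤ alphaF G S * omegaF G S := h S
    _ = omegaF G S * alphaF G S := Nat.mul_comm _ _
  · intro h S
    have := h S
    rw [alphaF_compl] at this
    calc S.card ≤ omegaF G S * alphaF G S := this
    _ = alphaF G S * omegaF G S := Nat.mul_comm _ _

end WPGT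

namespace WPGT
variable {n : ℕ}

lemma colorable_iff (G : SimpleGraph (Fin n)) (S : Finset (Fin n)) (m : ℕ) :
    (G.induce (↑S : Set (Fin n))).Colorable m ↔ ∃ c, ColoringOn G S c m := by
  constructor
  · rintro ⟨C⟩
    refine ⟨fun v => if h : v ∈ S then (C ⟨v, Finset.mem_coe.mpr h⟩).val else 0,
      fun v hv => ?_, fun i hi j hj hadj => ?_⟩
    · dsimp only
      rw [dif_pos hv]
      exact (C ⟨v, Finset.mem_coe.mpr hv⟩).isLt
    · dsimp only
      rw [dif_pos hi, dif_pos hj]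
      intro hval
      have hCadj : (G.induce (↑S : Set (Fin n))).Adj ⟨i, Finset.mem_coe.mpr hi⟩
          ⟨j, Finset.mem_coe.mpr hj⟩ := by
        simp only [SimpleGraph.comap_adj, Function.Embedding.coe_subtype]
        exact hadj
      exact C.valid hCadj (Fin.ext hval)
  · rintro ⟨c, hc⟩
    refine ⟨SimpleGraph.Coloring.mk
      (fun v => ⟨c v.1, hc.1 v.1 (Finset.mem_coe.mp v.2)⟩) ?_⟩
    intro u v hadj
    simp only [SimpleGraph.comap_adj, Function.Embedding.coe_subtype] at hadj
    intro hval
    exact hc.2 u.1 (Finset.mem_coe.mp u.2) v.1 (Finset.mem_coe.mp v.2) hadj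
      (congrArg Fin.val hval)

lemma chromaticNumber_induce (G : SimpleGraph (Fin n)) (S : Finset (Fin n)) :
    (G.induce (↑S : Set (Fin n))).chromaticNumber = (chiF G S : ℕ∞) := by
  obtain ⟨c₀, hc₀⟩ := exists_chi_coloring G S
  have hcol : (G.induce (↑S : Set (Fin n))).Colorable (chiF G S) :=
    (colorable_iff G S _).mpr ⟨c₀, hc₀⟩
  rw [hcol.chromaticNumber_eq_sInf]
  norm_cast
  congr 1
  ext m
  rw [Set.mem_setOf_eq, colorable_iff]
  rfl

lemma cliqueNum_induce (G : SimpleGraph (Fin n)) (S : Finset (Fin n)) :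
    cliqueNum (G.induce (↑S : Set (Fin n))) = omegaF G S := by
  unfold cliqueNum omegaF
  congr 1
  ext k
  simp only [Set.mem_setOf_eq]
  constructor
  · rintro ⟨t, ht⟩
    rw [SimpleGraph.isNClique_iff] at ht
    refine ⟨t.map ⟨fun v => v.1, Subtype.val_injective⟩, ⟨?_, ?_⟩, by
      rw [Finset.card_map]; exact ht.2⟩
    · intro v hv
      obtain ⟨u, _, rfl⟩ := Finset.mem_map.mp hv
      exact Finset.mem_coe.mp u.2
    · intro i hi j hj hij
      obtain ⟨u, hu, rfl⟩ := Finset.mem_map.mp hi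
      obtain ⟨v, hv, rfl⟩ := Finset.mem_map.mp hj
      have huv : u ≠ v := fun h => hij (by rw [h])
      have := ht.1 (Finset.mem_coe.mpr hu) (Finset.mem_coe.mpr hv) huv
      simpa only [SimpleGraph.comap_adj, Function.Embedding.coe_subtype,
        Function.Embedding.coeFn_mk] using this
  · rintro ⟨K, hK, hKcard⟩
    refine ⟨K.attach.map ⟨fun v => (⟨v.1, Finset.mem_coe.mpr (hK.1 v.2)⟩ :
      (↑S : Set (Fin n))), ?_⟩, ?_⟩
    · intro u v huv
      simp only [Subtype.mk.injEq] at huv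
      exact Subtype.ext huv
    · rw [SimpleGraph.isNClique_iff]
      constructor
      · intro u hu v hv huv
        simp only [Finset.coe_map, Set.mem_image, Finset.mem_coe, Finset.mem_attach] at hu hv
        obtain ⟨u', _, rfl⟩ := hu
        obtain ⟨v', _, rfl⟩ := hv
        have : u'.1 ≠ v'.1 := fun h => huv (by
          apply Subtype.ext; simpa using h)
        simp only [SimpleGraph.comap_adj, Function.Embedding.coe_subtype]
        exact hK.2 u'.1 u'.2 v'.1 v'.2 this
      · rw [Finset.card_map, Finset.card_attach]
        exact hKcard

theorem isPerfect_iff_chi_omega (G : SimpleGraph (Fin n)) :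
    IsPerfect G ↔ ∀ S : Finset (Fin n), chiF G S = omegaF G S := by
  constructor
  · intro h S
    have := h (↑S : Set (Fin n))
    rw [chromaticNumber_induce, cliqueNum_induce] at this
    exact_mod_cast this
  · intro h T
    have hT : T = (((Set.toFinite T).toFinset : Finset (Fin n)) : Set (Fin n)) := by
      rw [Set.Finite.coe_toFinset]
    rw [hT, chromaticNumber_induce, cliqueNum_induce, h (Set.toFinite T).toFinset]

end WPGT

theorem perfect_iff_irreducible_induced_subgraphs_complete {n : ℕ}
    (G : SimpleGraph (Fin n)) (hG : ∀ i : Fin n, ∃ j : Fin n, G.Adj i j) :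
    IsPerfect G ↔
      ∀ S : Finset (Fin n), S.Nonempty → IrreducibleOn G S →
        ∀ i ∈ S, ∀ j ∈ S, i ≠ j → G.Adj i j := by
  rw [WPGT.isPerfect_iff_chi_omega, WPGT.wpgt]
  exact ⟨WPGT.theta_alpha_to_rhs, WPGT.rhs_to_theta_alpha⟩
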